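/- Let m ≥ 2 and let a_1,…,a_m be positive integers with gcd(a_1,…,a_m) = 1, and set N = −a_1 + Σ_{i=2}^m a_i(d_{i−1}/d_i − 1). If N ≥ 0 and N cannot be written as a_1x_1 + ⋯ + a_mx_m with nonnegative integers x_1,…,x_m, then the sequence (a_1,…,a_m) is telescopic (Brauer–Seelbinder: equality in Brauer's bound forces the telescopic condition). -/

import Mathlib

/-- `dseq a i = gcd(a_1, …, a_i)`. -/
def dseq (a : ℕ → ℕ) (i : ℕ) : ℕ := (Finset.Icc 1 i).gcd a

/-- The telescopic condition:
`a_i/d_i ∈ (a_1/d_{i-1})ℤ_{≥0} + ⋯ + (a_{i-1}/d_{i-1})ℤ_{≥0}` for `2 ≤ i ≤ m`. -/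
def Telescopic (m : ℕ) (a : ℕ → ℕ) : Prop :=
  ∀ i, 2 ≤ i → i ≤ m →
    ∃ k : ℕ → ℕ,
      a i / dseq a i = ∑ j ∈ Finset.Icc 1 (i - 1), (a j / dseq a (i - 1)) * k j

def RepBS (m : ℕ) (a : ℕ → ℕ) (n : ℤ) : Prop :=
  ∃ x : ℕ → ℕ, n = ∑ i ∈ Finset.Icc 1 m, (a i : ℤ) * (x i : ℤ)

def Nval (m : ℕ) (a : ℕ → ℕ) : ℤ :=
  -(a 1 : ℤ) + ∑ i ∈ Finset.Icc 2 m,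
      (a i : ℤ) * (((dseq a (i - 1) / dseq a i : ℕ) : ℤ) - 1)

open Finset

lemma dseq_one (a : ℕ → ℕ) : dseq a 1 = a 1 := by
  simp [dseq]

lemma dseq_dvd (a : ℕ → ℕ) {i j : ℕ} (h1 : 1 ≤ j) (h2 : j ≤ i) : dseq a i ∣ a j :=
  Finset.gcd_dvd (by simp [h1, h2])

lemma dseq_dvd_dseq (a : ℕ → ℕ) {i i' : ℕ} (h : i ≤ i') : dseq a i' ∣ dseq a i :=
  Finset.dvd_gcd fun j hj => Finset.gcd_dvd (by simp at hj ⊢; omega)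

lemma dseq_pos (a : ℕ → ℕ) {i : ℕ} (h1 : 0 < a 1) (hi : 1 ≤ i) : 0 < dseq a i := by
  rcases Nat.eq_zero_or_pos (dseq a i) with h | h
  · have := dseq_dvd a le_rfl hi
    rw [h] at this
    omega
  · exact h

lemma dseq_succ (a : ℕ → ℕ) (i : ℕ) :
    dseq a (i + 1) = Nat.gcd (a (i + 1)) (dseq a i) := by
  have : Finset.Icc 1 (i + 1) = insert (i + 1) (Finset.Icc 1 i) := by
    ext x
    simp only [Finset.mem_insert, Finset.mem_Icc]
    omega
  rw [dseq, this, Finset.gcd_insert]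
  rfl

lemma dseq_div_eq (a : ℕ → ℕ) (m : ℕ) {i : ℕ} (him : i ≤ m) :
    dseq a i = dseq a m * dseq (fun j => a j / dseq a m) i := by
  have h : ∀ j ∈ Finset.Icc 1 i, a j = (a j / dseq a m) * dseq a m := fun j hj => by
    simp only [Finset.mem_Icc] at hj
    exact (Nat.div_mul_cancel (dseq_dvd a hj.1 (hj.2.trans him))).symm
  rw [dseq, Finset.gcd_congr rfl h, Finset.gcd_mul_right]
  simp [dseq, mul_comm, normalize_eq]

lemma div_transfer (a : ℕ → ℕ) (m : ℕ) (h1 : 0 < a 1) {i j : ℕ}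
    (h1j : 1 ≤ j) (hji : j ≤ i) (him : i ≤ m) :
    (a j / dseq a m) / dseq (fun l => a l / dseq a m) i = a j / dseq a i := by
  have hd : 0 < dseq a m := dseq_pos a h1 (le_trans (le_trans h1j hji) him)
  have haj : a j = dseq a m * (a j / dseq a m) :=
    (Nat.mul_div_cancel' (dseq_dvd a h1j (hji.trans him))).symm
  conv_rhs => rw [haj, dseq_div_eq a m him]
  rw [Nat.mul_div_mul_left _ _ hd]

lemma sum_telescope_Icc (g : ℕ → ℤ) (m : ℕ) (hm : 1 ≤ m) :
    ∑ i ∈ Finset.Icc 2 m, (g (i - 1) - g i) = g 1 - g m := by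
  induction m with
  | zero => omega
  | succ n ih =>
    rcases Nat.lt_or_ge n 1 with h | h
    · interval_cases n
      · simp
    · rw [Finset.sum_Icc_succ_top (by omega), ih h]
      simp only [Nat.add_sub_cancel]
      ring

lemma Nval_rigid (a : ℕ → ℕ) (m : ℕ) (hpos : ∀ i, 1 ≤ i → i ≤ m → 0 < a i)
    (hm : 1 ≤ m) (hgcd : dseq a m = 1) (hneg : Nval m a < 0) :
    ∀ i, 2 ≤ i → i ≤ m → dseq a (i - 1) = dseq a i ∨ a i = dseq a i := by
  have h1 : 0 < a 1 := hpos 1 le_rfl hm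
  have key : ∀ i ∈ Finset.Icc 2 m,
      ((dseq a (i - 1) : ℤ) - (dseq a i : ℤ)) ≤
        (a i : ℤ) * (((dseq a (i - 1) / dseq a i : ℕ) : ℤ) - 1) := by
    intro i hi
    simp only [Finset.mem_Icc] at hi
    have he : 0 < dseq a i := dseq_pos a h1 (by omega)
    have hdd : dseq a i ∣ dseq a (i - 1) := dseq_dvd_dseq a (by omega)
    have hq : dseq a i * (dseq a (i - 1) / dseq a i) = dseq a (i - 1) :=
      Nat.mul_div_cancel' hdd
    have hai : dseq a i ≤ a i := Nat.le_of_dvd (hpos i (by omega) hi.2) (dseq_dvd a (by omega) le_rfl)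
    have hq1 : 1 ≤ dseq a (i - 1) / dseq a i :=
      Nat.one_le_div_iff he |>.2 (Nat.le_of_dvd (dseq_pos a h1 (by omega)) hdd)
    have hfac : (0:ℤ) ≤ ((a i : ℤ) - (dseq a i : ℤ)) * (((dseq a (i-1) / dseq a i : ℕ) : ℤ) - 1) := by
      apply mul_nonneg <;> [skip; skip] <;> · push_cast; omega
    have hqz : (dseq a i : ℤ) * ((dseq a (i-1) / dseq a i : ℕ) : ℤ) = (dseq a (i-1) : ℤ) := by
      exact_mod_cast congrArg (Nat.cast : ℕ → ℤ) hq
    nlinarith [hfac, hqz]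
  have hsum : ∑ i ∈ Finset.Icc 2 m, ((dseq a (i - 1) : ℤ) - (dseq a i : ℤ))
      = (a 1 : ℤ) - 1 := by
    rw [sum_telescope_Icc (fun i => (dseq a i : ℤ)) m hm, dseq_one, hgcd]
    simp
  have hle : ∑ i ∈ Finset.Icc 2 m, ((dseq a (i - 1) : ℤ) - (dseq a i : ℤ)) ≤
      ∑ i ∈ Finset.Icc 2 m, (a i : ℤ) * (((dseq a (i - 1) / dseq a i : ℕ) : ℤ) - 1) :=
    Finset.sum_le_sum key
  have hge : ∑ i ∈ Finset.Icc 2 m, (a i : ℤ) * (((dseq a (i - 1) / dseq a i : ℕ) : ℤ) - 1) ≤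
      ∑ i ∈ Finset.Icc 2 m, ((dseq a (i - 1) : ℤ) - (dseq a i : ℤ)) := by
    rw [hsum]
    have hh : Nval m a = -(a 1 : ℤ) + ∑ i ∈ Finset.Icc 2 m,
        (a i : ℤ) * (((dseq a (i - 1) / dseq a i : ℕ) : ℤ) - 1) := rfl
    rw [hh] at hneg
    omega
  have heq := le_antisymm hle hge
  have hpt := (Finset.sum_eq_sum_iff_of_le key).1 heq
  intro i h2 him
  have hpti := hpt i (Finset.mem_Icc.2 ⟨h2, him⟩)
  have he : 0 < dseq a i := dseq_pos a h1 (by omega)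
  have hdd : dseq a i ∣ dseq a (i - 1) := dseq_dvd_dseq a (by omega)
  have hq : dseq a i * (dseq a (i - 1) / dseq a i) = dseq a (i - 1) :=
    Nat.mul_div_cancel' hdd
  have hqz : (dseq a i : ℤ) * ((dseq a (i-1) / dseq a i : ℕ) : ℤ) = (dseq a (i-1) : ℤ) := by
    exact_mod_cast congrArg (Nat.cast : ℕ → ℤ) hq
  have hfac : ((a i : ℤ) - (dseq a i : ℤ)) * (((dseq a (i-1) / dseq a i : ℕ) : ℤ) - 1) = 0 := by
    nlinarith [hpti, hqz]
  rcases mul_eq_zero.1 hfac with h | h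
  · right
    have : (a i : ℤ) = (dseq a i : ℤ) := by omega
    exact_mod_cast this
  · left
    have h' : ((dseq a (i-1) / dseq a i : ℕ) : ℤ) = 1 := by omega
    have h'' : dseq a (i-1) / dseq a i = 1 := by exact_mod_cast h'
    rw [h'', mul_one] at hq
    omega

lemma exists_unit (a : ℕ → ℕ) (m : ℕ)
    (hcond : ∀ i, 2 ≤ i → i ≤ m → dseq a (i - 1) = dseq a i ∨ a i = dseq a i) :
    ∀ r, 1 ≤ r → r ≤ m → ∃ j, 1 ≤ j ∧ j ≤ r ∧ a j = dseq a r := by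
  intro r
  induction r with
  | zero => omega
  | succ n ih =>
    intro _ h2
    rcases Nat.eq_zero_or_pos n with rfl | hn
    · exact ⟨1, le_rfl, le_rfl, (dseq_one a).symm⟩
    · rcases hcond (n + 1) (by omega) h2 with h | h
      · obtain ⟨j, hj1, hj2, hj3⟩ := ih hn (by omega)
        refine ⟨j, hj1, by omega, ?_⟩
        simpa using hj3.trans (by simpa using h)
      · exact ⟨n + 1, by omega, le_rfl, h⟩

lemma telescopic_of_cond (a : ℕ → ℕ) (m : ℕ) (hpos : ∀ i, 1 ≤ i → i ≤ m → 0 < a i)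
    (hcond : ∀ i, 2 ≤ i → i ≤ m → dseq a (i - 1) = dseq a i ∨ a i = dseq a i) :
    Telescopic m a := by
  intro i h2 him
  obtain ⟨j, hj1, hj2, hj3⟩ := exists_unit a m hcond (i - 1) (by omega) (by omega)
  have hd1 : 0 < dseq a (i - 1) := dseq_pos a (hpos 1 le_rfl (by omega)) (by omega)
  refine ⟨fun l => if l = j then a i / dseq a i else 0, ?_⟩
  rw [Finset.sum_eq_single j]
  · simp [hj3, Nat.div_self hd1]
  · intro b _ hne
    simp [hne]
  · intro h
    exact absurd (Finset.mem_Icc.2 ⟨hj1, hj2⟩) h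

lemma RepBS.add_mul {m : ℕ} {f : ℕ → ℕ} {u v : ℤ} (hu : RepBS m f u) (hv : RepBS m f v)
    (t : ℕ) : RepBS m f (u + v * t) := by
  obtain ⟨x, hx⟩ := hu
  obtain ⟨y, hy⟩ := hv
  refine ⟨fun i => x i + t * y i, ?_⟩
  rw [hx, hy, Finset.sum_mul, ← Finset.sum_add_distrib]
  refine Finset.sum_congr rfl fun i _ => ?_
  push_cast
  ring

lemma sum_ab (a : ℕ → ℕ) (m : ℕ) (x : ℕ → ℕ) :
    ∑ i ∈ Finset.Icc 1 m, (a i : ℤ) * (x i : ℤ)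
      = (dseq a m : ℤ) * ∑ i ∈ Finset.Icc 1 m, ((a i / dseq a m : ℕ) : ℤ) * (x i : ℤ) := by
  rw [Finset.mul_sum]
  refine Finset.sum_congr rfl fun i hi => ?_
  simp only [Finset.mem_Icc] at hi
  have h : dseq a m * (a i / dseq a m) = a i := Nat.mul_div_cancel' (dseq_dvd a hi.1 hi.2)
  rw [← mul_assoc]
  norm_cast
  rw [h]

lemma coprime_top (a : ℕ → ℕ) (m : ℕ) (hgcd : dseq a (m + 1) = 1) :
    Nat.Coprime (a (m + 1)) (dseq a m) := by
  have := dseq_succ a m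
  rw [hgcd] at this
  exact this.symm

lemma exists_s (a : ℕ → ℕ) (m : ℕ) (h1 : 0 < a 1) (hm : 1 ≤ m)
    (hgcd : dseq a (m + 1) = 1) (n : ℤ) :
    ∃ s : ℕ, s < dseq a m ∧ (dseq a m : ℤ) ∣ n - (a (m + 1) : ℤ) * s := by
  set d := dseq a m with hd
  set c := a (m + 1) with hc
  have hdpos : 0 < d := dseq_pos a h1 hm
  have hcop : Int.gcd (c : ℤ) (d : ℤ) = 1 := by
    have := coprime_top a m hgcd
    simpa [Int.gcd_natCast_natCast] using this
  have hbez := Int.gcd_eq_gcd_ab (c : ℤ) (d : ℤ)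
  rw [hcop] at hbez
  set u := Int.gcdA (c : ℤ) (d : ℤ)
  set v := Int.gcdB (c : ℤ) (d : ℤ)
  have hdz : (d : ℤ) ≠ 0 := by exact_mod_cast hdpos.ne'
  set s0 : ℤ := (n * u) % d with hs0
  have hs0nn : 0 ≤ s0 := Int.emod_nonneg _ hdz
  have hs0lt : s0 < d := Int.emod_lt_of_pos _ (by exact_mod_cast hdpos)
  refine ⟨s0.toNat, ?_, ?_⟩
  · omega
  · have htn : (s0.toNat : ℤ) = s0 := Int.toNat_of_nonneg hs0nn
    rw [htn]
    have hmod : s0 = n * u - d * ((n * u) / d) := by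
      rw [hs0]
      rw [Int.emod_def]
    refine ⟨c * ((n * u) / d) + n * v, ?_⟩
    rw [hmod]
    linear_combination n * hbez

lemma red_backward (a : ℕ → ℕ) (m : ℕ) (h1 : 0 < a 1) (hm : 1 ≤ m) (n : ℤ) (s : ℕ)
    (hdvd : (dseq a m : ℤ) ∣ n - (a (m + 1) : ℤ) * s)
    (hrep : RepBS m (fun j => a j / dseq a m) ((n - (a (m + 1) : ℤ) * s) / dseq a m)) :
    RepBS (m + 1) a n := by
  set d := dseq a m with hd
  set c := a (m + 1) with hc
  have hdpos : 0 < d := dseq_pos a h1 hm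
  obtain ⟨x, hx⟩ := hrep
  refine ⟨fun i => if i = m + 1 then s else x i, ?_⟩
  rw [Finset.sum_Icc_succ_top (by omega)]
  have hrw : ∑ i ∈ Finset.Icc 1 m, (a i : ℤ) * ((if i = m + 1 then (s:ℕ) else x i : ℕ) : ℤ)
      = ∑ i ∈ Finset.Icc 1 m, (a i : ℤ) * (x i : ℤ) := by
    refine Finset.sum_congr rfl fun i hi => ?_
    simp only [Finset.mem_Icc] at hi
    rw [if_neg (by omega)]
  rw [hrw]
  simp only [if_pos rfl]
  rw [sum_ab a m x, ← hd, ← hx, Int.mul_ediv_cancel' hdvd]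
  push_cast
  ring

lemma dvd_sum_ab (a : ℕ → ℕ) (m : ℕ) (x : ℕ → ℕ) :
    (dseq a m : ℤ) ∣ ∑ i ∈ Finset.Icc 1 m, (a i : ℤ) * (x i : ℤ) := by
  rw [sum_ab a m x]
  exact Dvd.intro _ rfl

lemma red_forward (a : ℕ → ℕ) (m : ℕ) (h1 : 0 < a 1) (hm : 1 ≤ m)
    (hgcd : dseq a (m + 1) = 1)
    (hrepc : RepBS m (fun j => a j / dseq a m) ((a (m + 1) : ℤ)))
    (n : ℤ) (s : ℕ) (hs : s < dseq a m)
    (hdvd : (dseq a m : ℤ) ∣ n - (a (m + 1) : ℤ) * s)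
    (hrep : RepBS (m + 1) a n) :
    RepBS m (fun j => a j / dseq a m) ((n - (a (m + 1) : ℤ) * s) / dseq a m) := by
  set d := dseq a m with hd
  set c := a (m + 1) with hc
  have hdpos : 0 < d := dseq_pos a h1 hm
  obtain ⟨x, hx⟩ := hrep
  rw [Finset.sum_Icc_succ_top (by omega)] at hx
  set X := x (m + 1) with hX
  have hdvd2 : (d : ℤ) ∣ n - (c : ℤ) * X := by
    rw [hx]
    simpa [hc, hd] using dvd_sum_ab a m x
  have hdvd3 : (d : ℤ) ∣ (c : ℤ) * ((X : ℤ) - s) := by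
    have : (c : ℤ) * ((X : ℤ) - s) = (n - (c:ℤ)*s) - (n - (c:ℤ)*X) := by ring
    rw [this]
    exact dvd_sub hdvd hdvd2
  have hcop : IsCoprime (d : ℤ) (c : ℤ) := by
    rw [Int.isCoprime_iff_gcd_eq_one, Int.gcd_natCast_natCast]
    exact (coprime_top a m hgcd).symm
  have hdvd4 : (d : ℤ) ∣ (X : ℤ) - s := hcop.dvd_of_dvd_mul_left ⟨_, hdvd3.choose_spec⟩
  -- X ≥ s
  have hXs : (s : ℤ) ≤ (X : ℤ) := by
    by_contra hlt
    push_neg at hlt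
    obtain ⟨k, hk⟩ := hdvd4
    have : (X : ℤ) - s < 0 := by omega
    have hk0 : k < 0 := by
      rcases lt_trichotomy k 0 with h | h | h
      · exact h
      · simp [h] at hk; omega
      · nlinarith
    have : (X : ℤ) - s ≤ -d := by
      rw [hk]
      nlinarith
    omega
  obtain ⟨t, ht⟩ := hdvd4
  have ht0 : 0 ≤ t := by nlinarith
  have hres : (n - (c:ℤ)*s) = d * ((∑ i ∈ Finset.Icc 1 m, ((a i / d : ℕ) : ℤ) * (x i : ℤ)) + (c:ℤ) * t) := by
    rw [hx, sum_ab a m x, ← hd]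
    have : (c:ℤ) * X - (c:ℤ) * s = (c:ℤ) * ((X:ℤ) - s) := by ring
    nlinarith [ht]
  rw [hres, Int.mul_ediv_cancel_left _ (by exact_mod_cast hdpos.ne')]
  have hrepsum : RepBS m (fun j => a j / d) (∑ i ∈ Finset.Icc 1 m, ((a i / d : ℕ) : ℤ) * (x i : ℤ)) :=
    ⟨x, rfl⟩
  have := RepBS.add_mul hrepsum hrepc t.toNat
  rwa [Int.toNat_of_nonneg ht0] at this

lemma Nval_succ (a : ℕ → ℕ) (m : ℕ) (h1 : 0 < a 1) (hm : 1 ≤ m)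
    (hgcd : dseq a (m + 1) = 1) :
    Nval (m + 1) a = (dseq a m : ℤ) * Nval m (fun j => a j / dseq a m)
      + (a (m + 1) : ℤ) * ((dseq a m : ℤ) - 1) := by
  set d := dseq a m with hd
  set b := fun j => a j / d with hb
  have hdpos : 0 < d := dseq_pos a h1 hm
  have hterm : ∀ i ∈ Finset.Icc 2 m,
      (a i : ℤ) * (((dseq a (i - 1) / dseq a i : ℕ) : ℤ) - 1)
        = (d : ℤ) * ((b i : ℤ) * (((dseq b (i - 1) / dseq b i : ℕ) : ℤ) - 1)) := by
    intro i hi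
    simp only [Finset.mem_Icc] at hi
    have hai : a i = d * b i := (Nat.mul_div_cancel' (dseq_dvd a (by omega) hi.2)).symm
    have h1' : dseq a (i - 1) = d * dseq b (i - 1) := dseq_div_eq a m (by omega)
    have h2' : dseq a i = d * dseq b i := dseq_div_eq a m hi.2
    have hq : dseq a (i - 1) / dseq a i = dseq b (i - 1) / dseq b i := by
      rw [h1', h2', Nat.mul_div_mul_left _ _ hdpos]
    rw [hq]
    conv_lhs => rw [hai]
    push_cast
    ring
  have ha1 : (a 1 : ℤ) = (d : ℤ) * (b 1 : ℤ) := by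
    have : a 1 = d * b 1 := (Nat.mul_div_cancel' (dseq_dvd a le_rfl hm)).symm
    exact_mod_cast this
  show -(a 1 : ℤ) + ∑ i ∈ Finset.Icc 2 (m + 1),
      (a i : ℤ) * (((dseq a (i - 1) / dseq a i : ℕ) : ℤ) - 1) = _
  rw [Finset.sum_Icc_succ_top (by omega), Finset.sum_congr rfl hterm, ← Finset.mul_sum]
  have htop : dseq a (m + 1 - 1) / dseq a (m + 1) = d := by
    rw [hgcd]
    simp [hd]
  rw [htop, ha1]
  show _ = (d:ℤ) * (-(b 1 : ℤ) + ∑ i ∈ Finset.Icc 2 m,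
      (b i : ℤ) * (((dseq b (i - 1) / dseq b i : ℕ) : ℤ) - 1)) + _
  ring

lemma tel_iff (a : ℕ → ℕ) (m : ℕ) (h1 : 0 < a 1) {i : ℕ} (h2 : 2 ≤ i) (him : i ≤ m)
    (k : ℕ → ℕ) :
    (a i / dseq a i = ∑ j ∈ Finset.Icc 1 (i - 1), (a j / dseq a (i - 1)) * k j) ↔
    ((fun l => a l / dseq a m) i / dseq (fun l => a l / dseq a m) i
      = ∑ j ∈ Finset.Icc 1 (i - 1),
          ((fun l => a l / dseq a m) j / dseq (fun l => a l / dseq a m) (i - 1)) * k j) := by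
  rw [div_transfer a m h1 (by omega) le_rfl him]
  have hs : ∑ j ∈ Finset.Icc 1 (i - 1),
      ((fun l => a l / dseq a m) j / dseq (fun l => a l / dseq a m) (i - 1)) * k j
        = ∑ j ∈ Finset.Icc 1 (i - 1), (a j / dseq a (i - 1)) * k j :=
    Finset.sum_congr rfl fun j hj => by
      simp only [Finset.mem_Icc] at hj
      rw [div_transfer a m h1 hj.1 hj.2 (by omega)]
  rw [hs]

lemma telescopic_down (a : ℕ → ℕ) (m : ℕ) (h1 : 0 < a 1)
    (ht : Telescopic (m + 1) a) : Telescopic m (fun j => a j / dseq a m) := by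
  intro i hi2 him
  obtain ⟨k, hk⟩ := ht i hi2 (by omega)
  exact ⟨k, (tel_iff a m h1 hi2 him k).1 hk⟩

lemma rep_symm (m : ℕ) (hm : 1 ≤ m) : ∀ a : ℕ → ℕ,
    (∀ i, 1 ≤ i → i ≤ m → 0 < a i) → dseq a m = 1 → Telescopic m a →
    ∀ n : ℤ, (RepBS m a n ↔ ¬ RepBS m a (Nval m a - n)) := by
  induction m, hm using Nat.le_induction with
  | base =>
    intro a hpos hgcd _ n
    have ha1 : a 1 = 1 := by rw [← dseq_one a, hgcd]
    have hNv : Nval 1 a = -1 := by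
      have he : Finset.Icc 2 1 = (∅ : Finset ℕ) := by
        apply Finset.Icc_eq_empty
        omega
      rw [Nval, he, ha1]
      simp
    have hrep : ∀ k : ℤ, RepBS 1 a k ↔ 0 ≤ k := by
      intro k
      constructor
      · rintro ⟨x, hx⟩
        rw [hx]
        apply Finset.sum_nonneg
        intro i _
        positivity
      · intro hk
        refine ⟨fun _ => k.toNat, ?_⟩
        simp [Finset.Icc_self, ha1, Int.toNat_of_nonneg hk]
    rw [hrep, hrep, hNv]
    omega
  | succ m hm ih =>
    intro a hpos hgcd htel n
    set d := dseq a m with hd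
    set b := fun j => a j / d with hb
    set c := a (m + 1) with hc
    have h1 : 0 < a 1 := hpos 1 le_rfl (by omega)
    have hdpos : 0 < d := dseq_pos a h1 hm
    have hbpos : ∀ i, 1 ≤ i → i ≤ m → 0 < b i := fun i hi him =>
      Nat.div_pos (Nat.le_of_dvd (hpos i hi (by omega)) (dseq_dvd a hi him)) hdpos
    have hbgcd : dseq b m = 1 := by
      have h := dseq_div_eq a m (le_refl m)
      rw [← hd, ← hb] at h
      nlinarith [h, dseq_pos b (hbpos 1 le_rfl hm) hm]
    have hbtel : Telescopic m b := telescopic_down a m h1 htel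
    have hrepc : RepBS m b (c : ℤ) := by
      obtain ⟨k, hk⟩ := htel (m + 1) (by omega) le_rfl
      rw [Nat.add_sub_cancel, hgcd, Nat.div_one] at hk
      refine ⟨k, ?_⟩
      rw [hc, hk]
      push_cast
      rfl
    obtain ⟨s, hs, hdvd⟩ := exists_s a m h1 hm hgcd n
    set n'' := (n - (c:ℤ) * s) / d with hn''
    have hdn : (d : ℤ) * n'' = n - (c:ℤ) * s := Int.mul_ediv_cancel' hdvd
    have E1 : RepBS (m + 1) a n ↔ RepBS m b n'' :=
      ⟨red_forward a m h1 hm hgcd hrepc n s hs hdvd,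
       red_backward a m h1 hm n s hdvd⟩
    set s' := d - 1 - s with hs'
    have hs'lt : s' < d := by omega
    have hcast : (s' : ℤ) = (d : ℤ) - 1 - s := by omega
    have hNs := Nval_succ a m h1 hm hgcd
    rw [← hd, ← hb, ← hc] at hNs
    have e2 : Nval (m + 1) a - n - (c:ℤ) * s' = (d:ℤ) * (Nval m b - n'') := by
      rw [hNs, hcast]
      linear_combination hdn
    have hdvd2 : (d : ℤ) ∣ (Nval (m + 1) a - n) - (c:ℤ) * s' := ⟨_, e2⟩
    have hq2 : ((Nval (m + 1) a - n) - (c:ℤ) * s') / d = Nval m b - n'' := by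
      rw [e2, Int.mul_ediv_cancel_left _ (by exact_mod_cast hdpos.ne')]
    have E2 : RepBS (m + 1) a (Nval (m + 1) a - n) ↔ RepBS m b (Nval m b - n'') := by
      constructor
      · intro h
        have := red_forward a m h1 hm hgcd hrepc _ s' hs'lt hdvd2 h
        rwa [hq2] at this
      · intro h
        exact red_backward a m h1 hm _ s' hdvd2 (by rwa [hq2])
    rw [E1, E2]
    exact ih b hbpos hbgcd hbtel n''

lemma bs_aux (m : ℕ) (hm : 2 ≤ m) : ∀ a : ℕ → ℕ,
    (∀ i, 1 ≤ i → i ≤ m → 0 < a i) → dseq a m = 1 →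
    ∀ N : ℤ, N = Nval m a → 0 ≤ N → ¬ RepBS m a N → Telescopic m a := by
  induction m, hm using Nat.le_induction with
  | base =>
    intro a hpos _ _ _ _ _ i h2 him
    have hi : i = 2 := by omega
    subst hi
    refine ⟨fun _ => a 2 / dseq a 2, ?_⟩
    show a 2 / dseq a 2 = ∑ j ∈ Finset.Icc 1 1, (a j / dseq a 1) * (a 2 / dseq a 2)
    simp [Finset.Icc_self, dseq_one, Nat.div_self (hpos 1 le_rfl (by omega))]
  | succ m hm ih =>
    intro a hpos hgcd N hN hN0 hnotrep
    set d := dseq a m with hd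
    set b := fun j => a j / d with hb
    set c := a (m + 1) with hc
    have h1 : 0 < a 1 := hpos 1 le_rfl (by omega)
    have hm1 : 1 ≤ m := by omega
    have hdpos : 0 < d := dseq_pos a h1 hm1
    have hbpos : ∀ i, 1 ≤ i → i ≤ m → 0 < b i := fun i hi him =>
      Nat.div_pos (Nat.le_of_dvd (hpos i hi (by omega)) (dseq_dvd a hi him)) hdpos
    have hbgcd : dseq b m = 1 := by
      have h := dseq_div_eq a m (le_refl m)
      rw [← hd, ← hb] at h
      nlinarith [h, dseq_pos b (hbpos 1 le_rfl hm1) hm1]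
    set N' := Nval m b with hN'
    have hNs := Nval_succ a m h1 hm1 hgcd
    rw [← hd, ← hb, ← hc, ← hN'] at hNs
    -- N' is not representable by b
    have hbnotrep : ¬ RepBS m b N' := by
      intro hr
      apply hnotrep
      have hc1 : ((d - 1 : ℕ) : ℤ) = (d : ℤ) - 1 := by omega
      have e1 : N - (c : ℤ) * ((d - 1 : ℕ) : ℤ) = (d : ℤ) * N' := by
        rw [hN, hNs, hc1]
        ring
      refine red_backward a m h1 hm1 N (d - 1) ⟨_, e1⟩ ?_
      rw [← hd, ← hc, e1, Int.mul_ediv_cancel_left _ (by exact_mod_cast hdpos.ne')]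
      exact hr
    -- b is telescopic
    have hbtel : Telescopic m b := by
      rcases lt_or_ge N' 0 with hneg | hge
      · exact telescopic_of_cond b m hbpos (Nval_rigid b m hbpos hm1 hbgcd hneg)
      · exact ih b hbpos hbgcd N' rfl hge hbnotrep
    -- a (m+1) is representable by b
    have hrepc : RepBS m b (c : ℤ) := by
      by_contra hnc
      rw [rep_symm m hm1 b hbpos hbgcd hbtel (c : ℤ)] at hnc
      push_neg at hnc
      rw [← hN'] at hnc
      apply hnotrep
      have hc2 : ((2 * d - 1 : ℕ) : ℤ) = 2 * (d : ℤ) - 1 := by omega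
      have e2 : N - (c : ℤ) * ((2 * d - 1 : ℕ) : ℤ) = (d : ℤ) * (N' - c) := by
        rw [hN, hNs, hc2]
        ring
      refine red_backward a m h1 hm1 N (2 * d - 1) ⟨_, e2⟩ ?_
      rw [← hd, ← hc, e2, Int.mul_ediv_cancel_left _ (by exact_mod_cast hdpos.ne')]
      exact hnc
    -- conclude
    intro i h2 him1
    rcases Nat.lt_or_ge i (m + 1) with hlt | hge
    · obtain ⟨k, hk⟩ := hbtel i h2 (by omega)
      exact ⟨k, (tel_iff a m h1 h2 (by omega) k).2 hk⟩
    · have hi : i = m + 1 := by omega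
      subst hi
      obtain ⟨x, hx⟩ := hrepc
      have hxn : c = ∑ j ∈ Finset.Icc 1 m, b j * x j := by
        have : ((∑ j ∈ Finset.Icc 1 m, b j * x j : ℕ) : ℤ)
            = ∑ j ∈ Finset.Icc 1 m, (b j : ℤ) * (x j : ℤ) := by
          push_cast
          rfl
        exact_mod_cast hx.trans this.symm
      refine ⟨x, ?_⟩
      rw [Nat.add_sub_cancel, hgcd, Nat.div_one]
      exact hxn

/-- **Brauer–Seelbinder.**  If `N = -a_1 + ∑_{i=2}^m a_i (d_{i-1}/d_i - 1)` is
nonnegative and not representable as `a_1 x_1 + ⋯ + a_m x_m` with nonnegative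
integers `x_i`, then the sequence `(a_1, …, a_m)` is telescopic. -/
theorem brauer_seelbinder
    (m : ℕ) (hm : 2 ≤ m) (a : ℕ → ℕ)
    (hpos : ∀ i, 1 ≤ i → i ≤ m → 0 < a i)
    (hgcd : (Finset.Icc 1 m).gcd a = 1)
    (N : ℤ)
    (hN : N = -(a 1 : ℤ) + ∑ i ∈ Finset.Icc 2 m,
        (a i : ℤ) * (((dseq a (i - 1) / dseq a i : ℕ) : ℤ) - 1))
    (hN0 : 0 ≤ N)
    (hnotrep : ¬ ∃ x : ℕ → ℕ, N = ∑ i ∈ Finset.Icc 1 m, (a i : ℤ) * (x i : ℤ)) :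
    Telescopic m a :=
  bs_aux m hm a hpos hgcd N hN hN0 hnotrep
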